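/- arXiv:1910.08280 — 4 statements merged into one kernel-verified Lean document; each statement's English description precedes it below -/
import Mathlib

section
/- Let n ≥ 1, λ > 0, and let K, H ∈ ℝ^{n×n} be symmetric matrices and G ∈ ℝ^{n×n} a matrix such that the 2n × 2n block matrix M = [[K, G], [Gᵀ, H]] is positive semidefinite. Define J̃(α, β) := (1/(2n))‖Kα + Gβ‖² + (1/n)·1ₙᵀ(Gᵀα + Hβ) + (λ/2)(αᵀKα + 2αᵀGβ + βᵀHβ) for α, β ∈ ℝⁿ, where 1ₙ is the all-ones vector. Then K + nλI is invertible, and the pair α̂ := (1/(nλ))(K + nλI)⁻¹G1ₙ, β̂ := −(1/(nλ))1ₙ is a global minimizer of J̃ over ℝⁿ × ℝⁿ, i.e., J̃(α̂, β̂) ≤ J̃(α, β) for all α, β ∈ ℝⁿ. -/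
open Matrix

lemma dot_symm {n : ℕ} (A : Matrix (Fin n) (Fin n) ℝ) (hA : A.IsSymm) (x y : Fin n → ℝ) :
    x ⬝ᵥ (A *ᵥ y) = y ⬝ᵥ (A *ᵥ x) := by
  rw [dotProduct_mulVec, ← mulVec_transpose, hA.eq, dotProduct_comm]

lemma dot_transpose {n : ℕ} (A : Matrix (Fin n) (Fin n) ℝ) (x y : Fin n → ℝ) :
    x ⬝ᵥ (Aᵀ *ᵥ y) = y ⬝ᵥ (A *ᵥ x) := by
  rw [dotProduct_mulVec, ← mulVec_transpose, transpose_transpose, dotProduct_comm]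

lemma dot_self_nonneg {n : ℕ} (x : Fin n → ℝ) : 0 ≤ x ⬝ᵥ x :=
  Finset.sum_nonneg fun i _ => mul_self_nonneg _

/-- finite-dimensional core of Theorem 1 (analytic solution of K-LSLD). -/
theorem stmt0 (n : ℕ) (hn : 1 ≤ n) (lam : ℝ) (hlam : 0 < lam)
    (K G H : Matrix (Fin n) (Fin n) ℝ) (hK : K.IsSymm) (hH : H.IsSymm)
    (hM : (Matrix.fromBlocks K G Gᵀ H).PosSemidef)
    (J : (Fin n → ℝ) → (Fin n → ℝ) → ℝ)
    (hJ : ∀ α β, J α β =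
      (1 / (2 * (n : ℝ))) * ((K *ᵥ α + G *ᵥ β) ⬝ᵥ (K *ᵥ α + G *ᵥ β))
      + (1 / (n : ℝ)) * ((fun _ => (1 : ℝ)) ⬝ᵥ (Gᵀ *ᵥ α + H *ᵥ β))
      + (lam / 2) * (α ⬝ᵥ (K *ᵥ α) + 2 * (α ⬝ᵥ (G *ᵥ β)) + β ⬝ᵥ (H *ᵥ β))) :
    IsUnit (K + ((n : ℝ) * lam) • (1 : Matrix (Fin n) (Fin n) ℝ)) ∧
    ∀ α β : Fin n → ℝ,
      J ((1 / ((n : ℝ) * lam)) •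
          ((K + ((n : ℝ) * lam) • (1 : Matrix (Fin n) (Fin n) ℝ))⁻¹ *ᵥ (G *ᵥ fun _ => (1 : ℝ))))
        ((-(1 / ((n : ℝ) * lam))) • (fun _ => (1 : ℝ)))
      ≤ J α β := by
  have hn0 : (0:ℝ) < (n:ℝ) := by exact_mod_cast hn
  set c : ℝ := (n : ℝ) * lam with hcdef
  have hc : 0 < c := mul_pos hn0 hlam
  -- K is positive semidefinite
  have hKpsd : K.PosSemidef := by
    have h := hM.submatrix (Sum.inl : Fin n → Fin n ⊕ Fin n)
    have heq : (Matrix.fromBlocks K G Gᵀ H).submatrix (Sum.inl : Fin n → Fin n ⊕ Fin n)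
        (Sum.inl : Fin n → Fin n ⊕ Fin n) = K := by
      ext i j; simp [Matrix.submatrix_apply]
    rwa [heq] at h
  have hA : (K + c • (1 : Matrix (Fin n) (Fin n) ℝ)).PosDef := by
    refine Matrix.PosDef.posSemidef_add hKpsd ?_
    rw [smul_one_eq_diagonal]
    exact (Matrix.posDef_diagonal_iff).mpr fun _ => hc
  have hAu : IsUnit (K + c • (1 : Matrix (Fin n) (Fin n) ℝ)) := hA.isUnit
  refine ⟨hAu, ?_⟩
  set one : Fin n → ℝ := (fun _ => (1 : ℝ)) with hone
  set a : Fin n → ℝ :=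
    (1 / c) • ((K + c • (1 : Matrix (Fin n) (Fin n) ℝ))⁻¹ *ᵥ (G *ᵥ one)) with ha
  set b : Fin n → ℝ := (-(1 / c)) • one with hb
  have hInv : (K + c • (1 : Matrix (Fin n) (Fin n) ℝ)) *
      (K + c • (1 : Matrix (Fin n) (Fin n) ℝ))⁻¹ = 1 :=
    Matrix.mul_nonsing_inv _ ((Matrix.isUnit_iff_isUnit_det _).mp hAu)
  have h1 : (K + c • (1 : Matrix (Fin n) (Fin n) ℝ)) *ᵥ a = (1 / c) • (G *ᵥ one) := by
    rw [ha, mulVec_smul, mulVec_mulVec, hInv, one_mulVec]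
  have h2 : K *ᵥ a = (1 / c) • (G *ᵥ one) - c • a := by
    rw [← h1, add_mulVec, smul_mulVec, one_mulVec]
    abel
  have hGb : G *ᵥ b = -((1 / c) • (G *ᵥ one)) := by
    rw [hb, mulVec_smul, neg_smul]
  have hF1 : K *ᵥ a + G *ᵥ b = (-c) • a := by
    rw [h2, hGb, neg_smul]
    abel
  have honeb : one = (-c) • b := by
    rw [hb, smul_smul]
    have : (-c) * (-(1 / c)) = 1 := by field_simp
    rw [this, one_smul]
  -- key expansion identity
  have key : ∀ d e : Fin n → ℝ, J (a + d) (b + e) = J a b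
      + (1 / (2 * (n : ℝ))) * ((K *ᵥ d + G *ᵥ e) ⬝ᵥ (K *ᵥ d + G *ᵥ e))
      + (lam / 2) * (d ⬝ᵥ (K *ᵥ d) + 2 * (d ⬝ᵥ (G *ᵥ e)) + e ⬝ᵥ (H *ᵥ e)) := by
    intro d e
    rw [hJ, hJ]
    have hv1 : K *ᵥ (a + d) + G *ᵥ (b + e) = ((-c) • a) + (K *ᵥ d + G *ᵥ e) := by
      rw [mulVec_add, mulVec_add, ← hF1]; abel
    have hv2 : Gᵀ *ᵥ (a + d) + H *ᵥ (b + e) = (Gᵀ *ᵥ a + H *ᵥ b) + (Gᵀ *ᵥ d + H *ᵥ e) := by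
      rw [mulVec_add, mulVec_add]; abel
    rw [hv1, hv2, hF1, mulVec_add, mulVec_add]
    -- expand all dot products
    simp only [mulVec_add, dotProduct_add, add_dotProduct, dotProduct_smul, smul_dotProduct,
      smul_eq_mul]
    -- canonicalize atoms
    rw [dot_symm K hK d a, dot_symm H hH e b,
      show one ⬝ᵥ (Gᵀ *ᵥ d) = -c * (d ⬝ᵥ (G *ᵥ b)) by
        rw [dot_transpose, honeb, mulVec_smul, dotProduct_smul, smul_eq_mul],
      show one ⬝ᵥ (H *ᵥ e) = -c * (b ⬝ᵥ (H *ᵥ e)) by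
        rw [honeb, smul_dotProduct, smul_eq_mul],
      dotProduct_comm (K *ᵥ d) a, dotProduct_comm (G *ᵥ e) a,
      dotProduct_comm (G *ᵥ e) (K *ᵥ d)]
    rw [hcdef]
    field_simp
    ring
  intro α β
  have h := key (α - a) (β - b)
  rw [show a + (α - a) = α by abel, show b + (β - b) = β by abel] at h
  rw [h]
  have hq : 0 ≤ (α - a) ⬝ᵥ (K *ᵥ (α - a)) + 2 * ((α - a) ⬝ᵥ (G *ᵥ (β - b)))
      + (β - b) ⬝ᵥ (H *ᵥ (β - b)) := by
    have hpsd := hM.dotProduct_mulVec_nonneg (Sum.elim (α - a) (β - b))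
    simp only [star_trivial, fromBlocks_mulVec, Sum.elim_comp_inl, Sum.elim_comp_inr,
      sumElim_dotProduct_sumElim, dotProduct_add] at hpsd
    rw [dot_transpose G (β - b) (α - a)] at hpsd
    linarith
  have h1' : 0 ≤ (1 / (2 * (n : ℝ))) *
      ((K *ᵥ (α - a) + G *ᵥ (β - b)) ⬝ᵥ (K *ᵥ (α - a) + G *ᵥ (β - b))) := by
    apply mul_nonneg (by positivity) (dot_self_nonneg _)
  have h2' : 0 ≤ (lam / 2) * ((α - a) ⬝ᵥ (K *ᵥ (α - a))
      + 2 * ((α - a) ⬝ᵥ (G *ᵥ (β - b))) + (β - b) ⬝ᵥ (H *ᵥ (β - b))) :=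
    mul_nonneg (by positivity) hq
  linarith
end

section
/- Assume the setting of the approximate modal-regression path integral with all model coefficients α₁ = ⋯ = αₙ = 0, and assume additionally that φ is convex. Then for all θ₁, θ₂ ∈ ℝⁿ, D̂[θ₂ | θ₁] ≥ (1/2) { θ₁ᵀH(θ₁)θ₁ − θ₂ᵀH(θ₁)θ₂ − 2(θ₁ − θ₂)ᵀh(θ₁) }. -/
open Matrix MeasureTheory

lemma aux_sum_mulVec {n : ℕ} (s : Finset (Fin n)) (M : Fin n → Matrix (Fin n) (Fin n) ℝ)
    (x : Fin n → ℝ) : (∑ i ∈ s, M i) *ᵥ x = ∑ i ∈ s, M i *ᵥ x := by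
  ext j
  simp [Matrix.mulVec, dotProduct, Matrix.sum_apply, Finset.sum_apply, Finset.sum_mul]
  exact Finset.sum_comm

lemma aux_vecMulVec_mulVec {n : ℕ} (u w x : Fin n → ℝ) :
    vecMulVec u w *ᵥ x = (w ⬝ᵥ x) • u := by
  ext j
  simp [Matrix.mulVec, dotProduct, Matrix.vecMulVec_apply, Finset.sum_mul, Finset.mul_sum,
    mul_comm, mul_left_comm]

lemma aux_dotProduct_finsum {n : ℕ} (θ : Fin n → ℝ) (s : Finset (Fin n))
    (f : Fin n → Fin n → ℝ) : θ ⬝ᵥ (∑ i ∈ s, f i) = ∑ i ∈ s, θ ⬝ᵥ f i := by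
  simp [dotProduct, Finset.sum_apply, Finset.mul_sum]
  exact Finset.sum_comm

lemma aux_dot_Hm {n : ℕ} (v : Fin n → Fin n → ℝ) (f : Fin n → Fin n → ℝ) (k : ℝ)
    (θ θ' : Fin n → ℝ) :
    θ ⬝ᵥ ((k • ∑ i, ∑ l, (f i l) • vecMulVec (v i) (v i)) *ᵥ θ')
      = k * ∑ i, ∑ l, f i l * ((θ ⬝ᵥ v i) * (v i ⬝ᵥ θ')) := by
  rw [Matrix.smul_mulVec, dotProduct_smul, smul_eq_mul, aux_sum_mulVec]
  congr 1
  rw [aux_dotProduct_finsum]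
  refine Finset.sum_congr rfl fun i _ => ?_
  rw [aux_sum_mulVec, aux_dotProduct_finsum]
  refine Finset.sum_congr rfl fun l _ => ?_
  rw [Matrix.smul_mulVec, aux_vecMulVec_mulVec, dotProduct_smul, dotProduct_smul]
  simp only [smul_eq_mul]; ring

lemma aux_dot_hv {n : ℕ} (v : Fin n → Fin n → ℝ) (g : Fin n → Fin n → ℝ) (k : ℝ)
    (θ : Fin n → ℝ) :
    θ ⬝ᵥ (k • ∑ i, ∑ l, (g i l) • v i) = k * ∑ i, ∑ l, g i l * (θ ⬝ᵥ v i) := by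
  rw [dotProduct_smul, smul_eq_mul]
  congr 1
  rw [aux_dotProduct_finsum]
  refine Finset.sum_congr rfl fun i _ => ?_
  rw [aux_dotProduct_finsum]
  refine Finset.sum_congr rfl fun l _ => ?_
  rw [dotProduct_smul, smul_eq_mul]

lemma aux_tangent_le {φ : ℝ → ℝ} (hconv : ConvexOn ℝ Set.univ φ) (hd : Differentiable ℝ φ)
    (a b : ℝ) : deriv φ a * (b - a) ≤ φ b - φ a := by
  rcases lt_trichotomy a b with h | h | h
  · have := hconv.deriv_le_slope (Set.mem_univ a) (Set.mem_univ b) h (hd a)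
    rw [slope_def_field] at this
    have hb : (0:ℝ) < b - a := by linarith
    calc deriv φ a * (b - a) ≤ (φ b - φ a) / (b - a) * (b - a) :=
          mul_le_mul_of_nonneg_right this hb.le
      _ = φ b - φ a := by field_simp
  · simp [h]
  · have := hconv.slope_le_deriv (Set.mem_univ b) (Set.mem_univ a) h (hd a)
    rw [slope_def_field] at this
    have hb : (0:ℝ) < a - b := by linarith
    have h2 : φ a - φ b ≤ deriv φ a * (a - b) := by
      calc φ a - φ b = (φ a - φ b) / (a - b) * (a - b) := by field_simp
        _ ≤ deriv φ a * (a - b) := mul_le_mul_of_nonneg_right this hb.le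
    nlinarith

/-- key lower bound in the proof of Theorem 2 of the paper, obtained from
the first-order convexity inequality. -/
theorem stmt4 (n : ℕ) (hn : 1 ≤ n) (y : Fin n → ℝ) (v : Fin n → Fin n → ℝ)
    (c : Fin n → Fin n → ℝ) (hc : ∀ i l, 0 ≤ c i l)
    (lam σ : ℝ) (hlam : 0 < lam) (hσ : 0 < σ)
    (φ : ℝ → ℝ) (hφ : ContDiff ℝ 1 φ)
    (φb : ℝ → ℝ) (hφb : ∀ t, φb t = -deriv φ t)
    (hφconv : ConvexOn ℝ Set.univ φ)
    (α : Fin n → ℝ) (hα : ∀ l, α l = 0)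
    (r : ℝ → Fin n → ℝ)
    (hr : ∀ s i, r s i = ∑ l, (α l * φ ((s - y l) ^ 2 / (2 * σ ^ 2))
        + ((y l - s) / ((n : ℝ) * lam * σ ^ 2)) * φb ((s - y l) ^ 2 / (2 * σ ^ 2))) * c i l)
    (Hm : (Fin n → ℝ) → Matrix (Fin n) (Fin n) ℝ)
    (hHm : ∀ θ, Hm θ = (1 / ((n : ℝ) ^ 2 * lam * σ ^ 2)) •
        ∑ i, ∑ l, (φb ((θ ⬝ᵥ v i - y l) ^ 2 / (2 * σ ^ 2)) * c i l) • vecMulVec (v i) (v i))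
    (hv : (Fin n → ℝ) → Fin n → ℝ)
    (hhv : ∀ θ, hv θ = (1 / (n : ℝ)) • ∑ i, ∑ l,
        ((α l * φ ((θ ⬝ᵥ v i - y l) ^ 2 / (2 * σ ^ 2))
          + (y l / ((n : ℝ) * lam * σ ^ 2)) * φb ((θ ⬝ᵥ v i - y l) ^ 2 / (2 * σ ^ 2))) * c i l) • v i)
    (D : (Fin n → ℝ) → (Fin n → ℝ) → ℝ)
    (hD : ∀ θ₁ θ₂ : Fin n → ℝ, D θ₂ θ₁ = (1 / (n : ℝ)) * ∑ i,
        ∫ t in (0:ℝ)..1, r ((θ₁ + t • (θ₂ - θ₁)) ⬝ᵥ v i) i * (v i ⬝ᵥ (θ₂ - θ₁))) :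
    ∀ θ₁ θ₂ : Fin n → ℝ,
      (1 / 2) * (θ₁ ⬝ᵥ (Hm θ₁ *ᵥ θ₁) - θ₂ ⬝ᵥ (Hm θ₁ *ᵥ θ₂)
        - 2 * ((θ₁ - θ₂) ⬝ᵥ hv θ₁)) ≤ D θ₂ θ₁ := by
  intro θ₁ θ₂
  have hn0 : ((n : ℝ)) ≠ 0 := Nat.cast_ne_zero.mpr (by omega)
  have hlam0 : lam ≠ 0 := hlam.ne'
  have hσ0 : σ ≠ 0 := hσ.ne'
  have hdiff : Differentiable ℝ φ := hφ.differentiable one_ne_zero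
  have hφbc : Continuous φb := by
    rw [show φb = fun t => -deriv φ t from funext hφb]
    exact (hφ.continuous_deriv le_rfl).neg
  -- notation
  set A : Fin n → Fin n → ℝ := fun i l => (θ₁ ⬝ᵥ v i - y l) ^ 2 / (2 * σ ^ 2) with hA
  set B : Fin n → Fin n → ℝ := fun i l => (θ₂ ⬝ᵥ v i - y l) ^ 2 / (2 * σ ^ 2) with hB
  -- Step 1: evaluate each integral
  have hint : ∀ i, (∫ t in (0:ℝ)..1, r ((θ₁ + t • (θ₂ - θ₁)) ⬝ᵥ v i) i * (v i ⬝ᵥ (θ₂ - θ₁)))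
      = ∑ l, (c i l / ((n:ℝ) * lam)) * (φ (B i l) - φ (A i l)) := by
    intro i
    set s1 : ℝ := θ₁ ⬝ᵥ v i with hs1
    set s2 : ℝ := θ₂ ⬝ᵥ v i with hs2
    have hsθ : ∀ t : ℝ, (θ₁ + t • (θ₂ - θ₁)) ⬝ᵥ v i = s1 + t * (s2 - s1) := by
      intro t
      simp [add_dotProduct, smul_dotProduct, sub_dotProduct, smul_eq_mul,
        hs1, hs2]
    have hdd : v i ⬝ᵥ (θ₂ - θ₁) = s2 - s1 := by
      rw [dotProduct_comm]
      simp [sub_dotProduct, hs1, hs2]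
    set F : ℝ → ℝ := fun t => ∑ l, (c i l / ((n:ℝ) * lam)) *
      φ ((s1 + t * (s2 - s1) - y l) ^ 2 / (2 * σ ^ 2)) with hFdef
    have hF : ∀ t : ℝ,
        HasDerivAt F (r ((θ₁ + t • (θ₂ - θ₁)) ⬝ᵥ v i) i * (v i ⬝ᵥ (θ₂ - θ₁))) t := by
      intro t
      have hsum : HasDerivAt F (∑ l, (c i l / ((n:ℝ) * lam)) *
          (deriv φ ((s1 + t * (s2 - s1) - y l) ^ 2 / (2 * σ ^ 2)) *
            (↑2 * (s1 + t * (s2 - s1) - y l) ^ 1 * (s2 - s1) / (2 * σ ^ 2)))) t := by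
        apply HasDerivAt.fun_sum
        intro l _
        have h1 : HasDerivAt (fun t : ℝ => s1 + t * (s2 - s1) - y l) (s2 - s1) t := by
          simpa using (((hasDerivAt_id t).mul_const (s2 - s1)).const_add s1).sub_const (y l)
        have h2 := (h1.pow 2).div_const (2 * σ ^ 2)
        have h3 : HasDerivAt φ
            (deriv φ ((s1 + t * (s2 - s1) - y l) ^ 2 / (2 * σ ^ 2)))
            ((s1 + t * (s2 - s1) - y l) ^ 2 / (2 * σ ^ 2)) := (hdiff _).hasDerivAt
        have h4 := (h3.comp t h2).const_mul (c i l / ((n:ℝ) * lam))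
        convert h4 using 1 <;> norm_num [Function.comp_def] <;> rfl
      convert hsum using 1
      rw [hr, hdd, hsθ, Finset.sum_mul]
      refine Finset.sum_congr rfl fun l _ => ?_
      simp only [hα, hφb, zero_mul, zero_add]
      generalize deriv φ ((s1 + t * (s2 - s1) - y l) ^ 2 / (2 * σ ^ 2)) = dφu

      ring
    have hcont : Continuous fun t : ℝ =>
        r ((θ₁ + t • (θ₂ - θ₁)) ⬝ᵥ v i) i * (v i ⬝ᵥ (θ₂ - θ₁)) := by
      have heq : (fun t : ℝ => r ((θ₁ + t • (θ₂ - θ₁)) ⬝ᵥ v i) i * (v i ⬝ᵥ (θ₂ - θ₁)))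
          = fun t : ℝ => (∑ l, (α l * φ ((s1 + t * (s2 - s1) - y l) ^ 2 / (2 * σ ^ 2))
            + ((y l - (s1 + t * (s2 - s1))) / ((n : ℝ) * lam * σ ^ 2)) *
              φb ((s1 + t * (s2 - s1) - y l) ^ 2 / (2 * σ ^ 2))) * c i l)
            * (v i ⬝ᵥ (θ₂ - θ₁)) := by
        funext t; rw [hr, hsθ]
      rw [heq]
      apply Continuous.mul _ continuous_const
      apply continuous_finset_sum
      intro l _
      apply Continuous.mul _ continuous_const
      apply Continuous.add
      · exact continuous_const.mul (hφ.continuous.comp (by fun_prop))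
      · exact Continuous.mul (by fun_prop) (hφbc.comp (by fun_prop))
    have hIeq := intervalIntegral.integral_eq_sub_of_hasDerivAt
      (f := F) (fun t _ => hF t) ((hcont.intervalIntegrable 0 1))
    rw [hIeq]
    have hF1 : F 1 = ∑ l, (c i l / ((n:ℝ) * lam)) * φ (B i l) := by
      refine Finset.sum_congr rfl fun l _ => ?_
      have : s1 + (1:ℝ) * (s2 - s1) - y l = s2 - y l := by ring
      rw [this]
    have hF0 : F 0 = ∑ l, (c i l / ((n:ℝ) * lam)) * φ (A i l) := by
      refine Finset.sum_congr rfl fun l _ => ?_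
      have : s1 + (0:ℝ) * (s2 - s1) - y l = s1 - y l := by ring
      rw [this]
    rw [hF1, hF0, ← Finset.sum_sub_distrib]
    exact Finset.sum_congr rfl fun l _ => by ring
  -- Step 2: value of D
  have hDval : D θ₂ θ₁ = ∑ i, ∑ l, (c i l / ((n:ℝ) ^ 2 * lam)) * (φ (B i l) - φ (A i l)) := by
    rw [hD]
    rw [Finset.sum_congr rfl fun i _ => hint i, Finset.mul_sum]
    refine Finset.sum_congr rfl fun i _ => ?_
    rw [Finset.mul_sum]
    refine Finset.sum_congr rfl fun l _ => ?_
    have hX : ∀ X : ℝ, 1 / (n:ℝ) * (c i l / ((n:ℝ) * lam) * X)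
        = c i l / ((n:ℝ) ^ 2 * lam) * X := by
      intro X; ring
    exact hX _
  -- Step 3: value of LHS
  have hL1 : θ₁ ⬝ᵥ (Hm θ₁ *ᵥ θ₁) = (1 / ((n : ℝ) ^ 2 * lam * σ ^ 2)) *
      ∑ i, ∑ l, (φb (A i l) * c i l) * ((θ₁ ⬝ᵥ v i) * (v i ⬝ᵥ θ₁)) := by
    rw [hHm]; exact aux_dot_Hm v _ _ θ₁ θ₁
  have hL2 : θ₂ ⬝ᵥ (Hm θ₁ *ᵥ θ₂) = (1 / ((n : ℝ) ^ 2 * lam * σ ^ 2)) *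
      ∑ i, ∑ l, (φb (A i l) * c i l) * ((θ₂ ⬝ᵥ v i) * (v i ⬝ᵥ θ₂)) := by
    rw [hHm]; exact aux_dot_Hm v _ _ θ₂ θ₂
  have hL3 : (θ₁ - θ₂) ⬝ᵥ hv θ₁ = (1 / (n : ℝ)) *
      ∑ i, ∑ l, ((y l / ((n : ℝ) * lam * σ ^ 2)) * φb (A i l) * c i l) *
        ((θ₁ - θ₂) ⬝ᵥ v i) := by
    rw [hhv]
    simp only [hα, zero_mul, zero_add]
    exact aux_dot_hv v (fun i l => (y l / ((n : ℝ) * lam * σ ^ 2)) * φb (A i l) * c i l)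
      _ (θ₁ - θ₂)
  rw [hL1, hL2, hL3, hDval]
  have hdotsub : ∀ i, (θ₁ - θ₂) ⬝ᵥ v i = θ₁ ⬝ᵥ v i - θ₂ ⬝ᵥ v i := fun i => by
    simp [sub_dotProduct]
  have hdot1 : ∀ i, v i ⬝ᵥ θ₁ = θ₁ ⬝ᵥ v i := fun i => dotProduct_comm _ _
  have hdot2 : ∀ i, v i ⬝ᵥ θ₂ = θ₂ ⬝ᵥ v i := fun i => dotProduct_comm _ _
  simp only [hdotsub, hdot1, hdot2]
  simp only [Finset.mul_sum]
  simp only [← Finset.sum_sub_distrib]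
  simp only [Finset.mul_sum]
  refine Finset.sum_le_sum fun i _ => Finset.sum_le_sum fun l _ => ?_
  -- per-term inequality
  have hkey : deriv φ (A i l) * (B i l - A i l) ≤ φ (B i l) - φ (A i l) :=
    aux_tangent_le hφconv hdiff _ _
  have hcnn : 0 ≤ c i l / ((n:ℝ) ^ 2 * lam) :=
    div_nonneg (hc i l) (by positivity)
  have h2 : (c i l / ((n:ℝ) ^ 2 * lam)) * (deriv φ (A i l) * (B i l - A i l))
      ≤ (c i l / ((n:ℝ) ^ 2 * lam)) * (φ (B i l) - φ (A i l)) :=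
    mul_le_mul_of_nonneg_left hkey hcnn
  refine le_trans (le_of_eq ?_) h2
  simp only [hφb]
  generalize deriv φ (A i l) = dA
  simp only [hA, hB]
  ring
end

section
/- Let p : ℝ → ℝ be an everywhere positive differentiable function and r : ℝ → ℝ a differentiable function. Assume that r²·p, r·p', r'·p, and (p'/p)²·p are integrable on ℝ, that the derivative of y ↦ r(y)p(y) is integrable on ℝ, and that r(y)p(y) → 0 as y → +∞ and as y → −∞. Then (1/2)∫ℝ (r(y) − p'(y)/p(y))² p(y) dy = (1/2)∫ℝ r(y)² p(y) dy + ∫ℝ r'(y) p(y) dy + (1/2)∫ℝ (p'(y)/p(y))² p(y) dy. -/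
open MeasureTheory

/-- decomposition of the (one-dimensional) Fisher divergence via
integration by parts under the vanishing-at-infinity condition. -/
theorem stmt8 (p r : ℝ → ℝ) (hp : ∀ y, 0 < p y)
    (hpd : Differentiable ℝ p) (hrd : Differentiable ℝ r)
    (h1 : Integrable (fun y => r y ^ 2 * p y))
    (h2 : Integrable (fun y => r y * deriv p y))
    (h3 : Integrable (fun y => deriv r y * p y))
    (h4 : Integrable (fun y => (deriv p y / p y) ^ 2 * p y))
    (h5 : Integrable (deriv fun y => r y * p y))
    (htop : Filter.Tendsto (fun y => r y * p y) Filter.atTop (nhds 0))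
    (hbot : Filter.Tendsto (fun y => r y * p y) Filter.atBot (nhds 0)) :
    (1 / 2) * ∫ y, (r y - deriv p y / p y) ^ 2 * p y
      = (1 / 2) * (∫ y, r y ^ 2 * p y) + (∫ y, deriv r y * p y)
        + (1 / 2) * ∫ y, (deriv p y / p y) ^ 2 * p y := by
  -- derivative of r*p
  have hderiv : ∀ x, HasDerivAt (fun y => r y * p y)
      (deriv r x * p x + r x * deriv p x) x :=
    fun x => (hrd x).hasDerivAt.mul (hpd x).hasDerivAt
  have hderiv_eq : (deriv fun y => r y * p y)
      = fun x => deriv r x * p x + r x * deriv p x := by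
    funext x; exact (hderiv x).deriv
  have hzero : ∫ x, (deriv r x * p x + r x * deriv p x) = 0 := by
    have := MeasureTheory.integral_of_hasDerivAt_of_tendsto hderiv
      (by rw [← hderiv_eq]; exact h5) hbot htop
    simpa using this
  have hsum : (∫ x, deriv r x * p x) + ∫ x, r x * deriv p x = 0 := by
    rw [← integral_add h3 h2]; exact hzero
  -- pointwise expansion
  have hexp : ∀ y, (r y - deriv p y / p y) ^ 2 * p y
      = r y ^ 2 * p y - 2 * (r y * deriv p y) + (deriv p y / p y) ^ 2 * p y := by
    intro y
    have hy := (hp y).ne'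
    field_simp
    ring
  rw [show (fun y => (r y - deriv p y / p y) ^ 2 * p y)
      = fun y => r y ^ 2 * p y - 2 * (r y * deriv p y) + (deriv p y / p y) ^ 2 * p y
    from funext hexp]
  have hsub : Integrable (fun y => r y ^ 2 * p y - 2 * (r y * deriv p y)) :=
    h1.sub (h2.const_mul 2)
  rw [integral_add hsub h4, integral_sub h1 (h2.const_mul 2), MeasureTheory.integral_const_mul]
  have : ∫ x, r x * deriv p x = - ∫ x, deriv r x * p x := by linarith
  rw [this]; ring
end

section
/- Let n ≥ 2, λ > 0, let K ∈ ℝ^{n×n} be symmetric positive semidefinite, and let G ∈ ℝ^{n×n}. Set L := (K + (n−1)λ I)⁻¹, c := 1/((n−1)λ), E := 1ₙ1ₙᵀ − I (the matrix with zeros on the diagonal and ones elsewhere), and S := c·G·E. Then L is symmetric positive definite, so L_{ll} > 0 for every l; let T be the diagonal matrix with T_{ll} := (LS)_{ll}/L_{ll}. For each l ∈ {1,…,n}, define α̃^{(l)} := L(c·G(1ₙ − e_l) + t_l e_l), where t_l ∈ ℝ is chosen so that the l-th coordinate of α̃^{(l)} is zero. Then t_l = −(LS)_{ll}/L_{ll}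 is the unique such choice, and the matrix A ∈ ℝ^{n×n} whose l-th column is α̃^{(l)} satisfies A = L(S − T). -/
open Matrix

/-- closed-form matrix expression assembling all leave-one-out
coefficient vectors (Appendix B of the paper). -/
theorem stmt15 (n : ℕ) (hn : 2 ≤ n) (lam : ℝ) (hlam : 0 < lam)
    (K G : Matrix (Fin n) (Fin n) ℝ) (hK : K.PosSemidef)
    (L : Matrix (Fin n) (Fin n) ℝ)
    (hL : L = (K + (((n : ℝ) - 1) * lam) • (1 : Matrix (Fin n) (Fin n) ℝ))⁻¹)
    (c : ℝ) (hc : c = 1 / (((n : ℝ) - 1) * lam))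
    (E : Matrix (Fin n) (Fin n) ℝ)
    (hE : E = vecMulVec (fun _ => (1 : ℝ)) (fun _ => (1 : ℝ)) - 1)
    (S : Matrix (Fin n) (Fin n) ℝ) (hS : S = c • (G * E)) :
    L.PosDef ∧ (∀ l, 0 < L l l) ∧
    (∀ (l : Fin n) (t : ℝ),
      (L *ᵥ (c • (G *ᵥ ((fun _ => (1 : ℝ)) - (Pi.single l 1 : Fin n → ℝ)))
          + t • (Pi.single l 1 : Fin n → ℝ))) l = 0
        ↔ t = -((L * S) l l) / L l l) ∧
    (Matrix.of fun i l =>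
        (L *ᵥ (c • (G *ᵥ ((fun _ => (1 : ℝ)) - (Pi.single l 1 : Fin n → ℝ)))
          + (-((L * S) l l) / L l l) • (Pi.single l 1 : Fin n → ℝ))) i)
      = L * (S - Matrix.diagonal fun l => (L * S) l l / L l l) := by
  have hpos : 0 < ((n : ℝ) - 1) * lam := by
    have h2 : (2 : ℝ) ≤ (n : ℝ) := by exact_mod_cast hn
    nlinarith
  have hPD : (K + (((n : ℝ) - 1) * lam) • (1 : Matrix (Fin n) (Fin n) ℝ)).PosDef := by
    have h1 : ((((n : ℝ) - 1) * lam) • (1 : Matrix (Fin n) (Fin n) ℝ)).PosDef := by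
      rw [show (((n : ℝ) - 1) * lam) • (1 : Matrix (Fin n) (Fin n) ℝ)
          = Matrix.diagonal (fun _ => ((n : ℝ) - 1) * lam) by
        ext i j; by_cases h : i = j <;> simp [Matrix.one_apply, Matrix.diagonal, h]]
      exact Matrix.posDef_diagonal_iff.mpr fun _ => hpos
    exact h1.posSemidef_add hK
  have hLPD : L.PosDef := by rw [hL]; exact hPD.inv
  have hdiag : ∀ l, 0 < L l l := by
    intro l
    have := hLPD.dotProduct_mulVec_pos (x := Pi.single l 1) (fun h => by simpa using congrFun h l)
    simpa [dotProduct, mulVec, Pi.single_apply, Finset.mul_sum, mul_comm] using this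
  have hkey : ∀ l : Fin n,
      c • (G *ᵥ ((fun _ => (1 : ℝ)) - (Pi.single l 1 : Fin n → ℝ)))
        = fun i => S i l := by
    intro l
    funext i
    simp only [hS, hE, Pi.smul_apply, mulVec, dotProduct, smul_eq_mul,
      Matrix.smul_apply, Matrix.mul_apply, Matrix.sub_apply, vecMulVec_apply,
      Matrix.one_apply, Pi.sub_apply, Pi.single_apply]
    rw [Finset.mul_sum, Finset.mul_sum]
    congr 1; funext j
    by_cases h : j = l <;> simp [h] <;> ring
  have hmv : ∀ l i, (L *ᵥ fun j => S j l) i = (L * S) i l := by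
    intro l i; simp [mulVec, dotProduct, Matrix.mul_apply]
  refine ⟨hLPD, hdiag, ?_, ?_⟩
  · intro l t
    rw [hkey l]
    have h1 : (L *ᵥ ((fun j => S j l) + t • (Pi.single l 1 : Fin n → ℝ))) l
        = (L * S) l l + t * L l l := by
      rw [mulVec_add, mulVec_smul]
      simp [hmv, mulVec, dotProduct, Pi.single_apply, mul_comm, Matrix.mul_apply]
    rw [h1]
    have hL0 : L l l ≠ 0 := ne_of_gt (hdiag l)
    constructor
    · intro h
      field_simp
      linarith
    · intro h
      rw [h]
      field_simp
      ring
  · ext i l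
    rw [Matrix.of_apply, hkey l, mulVec_add, mulVec_smul]
    have hsingle : (L *ᵥ (Pi.single l 1 : Fin n → ℝ)) i = L i l := by
      simp [mulVec, dotProduct, Pi.single_apply, mul_comm]
    simp only [Pi.add_apply, Pi.smul_apply, hsingle, hmv, smul_eq_mul,
      Matrix.mul_sub, Matrix.sub_apply]
    have hd : (L * Matrix.diagonal fun l => (L * S) l l / L l l) i l
        = L i l * ((L * S) l l / L l l) := by
      simp [Matrix.mul_apply, Matrix.diagonal, Finset.sum_ite_eq, mul_comm]
    rw [hd]
    have hL0 : L l l ≠ 0 := ne_of_gt (hdiag l)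
    field_simp
    ring
end
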